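/- Set α = γ₁ + ⋯ + γₙ and α' = λ₁γ₁ + ⋯ + λₙγₙ in ⋀²V, where λ₁, …, λₙ ∈ ℂ are pairwise distinct. If δ₁, …, δₙ ∈ ⋀²V are nonzero decomposable 2-vectors such that both α and α' lie in the linear span of δ₁, …, δₙ, then there exist a permutation σ of {1, …, n} and nonzero scalars c₁, …, cₙ ∈ ℂ with δᵢ = cᵢ · γ_{σ(i)} for every i. (Uniqueness of the simultaneous rank-2 decomposition of a general pair of 2-vectors.) -/

import Mathlib

open Module ExteriorAlgebra

namespace UniqSimDec

section Ring
variable {A : Type*} [Ring A] {ι : Type*} [DecidableEq ι]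

theorem binom_sq_zero {x y : A} (h : Commute x y) (hx : x * x = 0) :
    ∀ m : ℕ, (x + y) ^ (m + 1) = y ^ (m + 1) + (m + 1) • (x * y ^ m)
  | 0 => by simp [add_comm]
  | m + 1 => by
    rw [pow_succ, binom_sq_zero h hx m, add_mul, mul_add, mul_add, smul_mul_assoc, smul_mul_assoc,
      ← pow_succ]
    have h2 : x * y ^ m * x = 0 := by
      have hyx : y ^ m * x = x * y ^ m := ((h.symm).pow_left m).eq
      rw [mul_assoc, hyx, ← mul_assoc, hx, zero_mul]
    rw [h2, smul_zero, zero_add, ((h.symm).pow_left (m + 1)).eq, mul_assoc, ← pow_succ,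
      succ_nsmul,
      succ_nsmul (x * y ^ (m + 1)) (m + 1), succ_nsmul (x * y ^ (m + 1)) m]
    abel

theorem sum_pow_overflow (f : ι → A) (hc : ∀ i j, Commute (f i) (f j))
    (hsq : ∀ i, f i * f i = 0) (s : Finset ι) :
    ∀ k, s.card < k → (∑ i ∈ s, f i) ^ k = 0 := by
  induction s using Finset.induction_on with
  | empty =>
    intro k hk
    rw [Finset.sum_empty, zero_pow]; omega
  | insert _ _ ha ih =>
    rename_i a s
    intro k hk
    rw [Finset.card_insert_of_notMem ha] at hk
    obtain ⟨m, rfl⟩ : ∃ m, k = m + 1 := ⟨k - 1, by omega⟩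
    have hcom : Commute (f a) (∑ i ∈ s, f i) := Commute.sum_right _ _ _ fun i _ => hc a i
    rw [Finset.sum_insert ha, binom_sq_zero hcom (hsq a), ih (m + 1) (by omega)]
    obtain ⟨l, rfl⟩ : ∃ l, m = l + 1 := ⟨m - 1, by omega⟩
    rw [ih (l + 1) (by omega), mul_zero, smul_zero, add_zero]

theorem sum_pow_card (f : ι → A) (hc : ∀ i j, Commute (f i) (f j))
    (hsq : ∀ i, f i * f i = 0) (s : Finset ι) :
    (∑ i ∈ s, f i) ^ s.card = s.card.factorial • s.noncommProd f (fun i _ j _ _ => hc i j) := by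
  induction s using Finset.induction_on with
  | empty => simp; exact (Finset.noncommProd_empty f _).symm
  | insert _ _ ha ih =>
    rename_i a s
    have hcom : Commute (f a) (∑ i ∈ s, f i) := Commute.sum_right _ _ _ fun i _ => hc a i
    erw [Finset.sum_insert ha, Finset.card_insert_of_notMem ha,
      Finset.noncommProd_insert_of_notMem _ _ _ _ ha,
      binom_sq_zero hcom (hsq a) s.card,
      sum_pow_overflow f hc hsq s (s.card + 1) (by omega), zero_add, ih,
      Nat.factorial_succ, mul_smul_comm, smul_smul]

end Ring

section Smul
variable {A : Type*} [Ring A] [Module ℂ A] [SMulCommClass ℂ A A] [IsScalarTower ℂ A A]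
  {ι : Type*} [DecidableEq ι]

theorem commute_smul {x y : A} (h : Commute x y) (c d : ℂ) : Commute (c • x) (d • y) := by
  show _ = _
  rw [smul_mul_smul_comm, smul_mul_smul_comm, h.eq, mul_comm c d]

theorem noncommProd_smul (f : ι → A) (c : ι → ℂ) (hc : ∀ i j, Commute (f i) (f j))
    (s : Finset ι) :
    s.noncommProd (fun i => c i • f i) (fun i _ j _ _ => commute_smul (hc i j) _ _)
      = (∏ i ∈ s, c i) • s.noncommProd f (fun i _ j _ _ => hc i j) := by
  induction s using Finset.induction_on with
  | empty => simp; exact (Finset.noncommProd_empty _ _).trans (Finset.noncommProd_empty f _).symm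
  | insert _ _ ha ih =>
    rename_i a s
    erw [Finset.noncommProd_insert_of_notMem _ _ _ _ ha,
      Finset.noncommProd_insert_of_notMem _ _ _ _ ha, Finset.prod_insert ha, ih,
      smul_mul_smul_comm]

end Smul

section Ext
variable {V : Type*} [AddCommGroup V] [Module ℂ V] {n : ℕ}

theorem anticomm (x y : V) : ι ℂ x * ι ℂ y = -(ι ℂ y * ι ℂ x) := by
  have h := ExteriorAlgebra.ι_sq_zero (R := ℂ) (x + y)
  rw [map_add, add_mul, mul_add, mul_add, ExteriorAlgebra.ι_sq_zero,
    ExteriorAlgebra.ι_sq_zero, zero_add, add_zero] at h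
  exact eq_neg_of_add_eq_zero_left h

theorem commute_pair_iota (x y v : V) : Commute (ι ℂ x * ι ℂ y) (ι ℂ v) := by
  show _ = _
  calc ι ℂ x * ι ℂ y * ι ℂ v = ι ℂ x * (ι ℂ y * ι ℂ v) := mul_assoc _ _ _
    _ = ι ℂ x * -(ι ℂ v * ι ℂ y) := by rw [anticomm y v]
    _ = -(ι ℂ x * ι ℂ v) * ι ℂ y := by rw [mul_neg, neg_mul, mul_assoc]
    _ = -(-(ι ℂ v * ι ℂ x)) * ι ℂ y := by rw [anticomm x v]
    _ = ι ℂ v * (ι ℂ x * ι ℂ y) := by rw [neg_neg, mul_assoc]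

/-- The basic degree-two element `ι e(i,0) * ι e(i,1)`. -/
noncomputable def g (e : Fin n × Fin 2 → V) (i : Fin n) : ExteriorAlgebra ℂ V :=
  ι ℂ (e (i, 0)) * ι ℂ (e (i, 1))

theorem g_comm (e : Fin n × Fin 2 → V) (i j : Fin n) : Commute (g e i) (g e j) :=
  ((commute_pair_iota _ _ _).mul_right (commute_pair_iota _ _ _))

theorem pair_sq_zero (x y : V) : (ι ℂ x * ι ℂ y) * (ι ℂ x * ι ℂ y) = 0 := by
  calc (ι ℂ x * ι ℂ y) * (ι ℂ x * ι ℂ y) = ι ℂ x * (ι ℂ y * ι ℂ x) * ι ℂ y := by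
        rw [mul_assoc, mul_assoc, mul_assoc]
    _ = ι ℂ x * -(ι ℂ x * ι ℂ y) * ι ℂ y := by rw [anticomm y x]
    _ = -(ι ℂ x * ι ℂ x * ι ℂ y * ι ℂ y) := by noncomm_ring
    _ = 0 := by rw [ExteriorAlgebra.ι_sq_zero, zero_mul, zero_mul, neg_zero]

theorem g_sq (e : Fin n × Fin 2 → V) (i : Fin n) : g e i * g e i = 0 := pair_sq_zero _ _

theorem absorb (e : Fin n × Fin 2 → V) (i : Fin n) (t : Fin 2) :
    ι ℂ (e (i, t)) * g e i = 0 := by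
  fin_cases t
  · show ι ℂ (e (i, 0)) * g e i = 0
    rw [g, ← mul_assoc, ExteriorAlgebra.ι_sq_zero, zero_mul]
  · show ι ℂ (e (i, 1)) * g e i = 0
    rw [g, ← mul_assoc, anticomm (e (i, 1)) (e (i, 0)), neg_mul, mul_assoc,
      ExteriorAlgebra.ι_sq_zero, mul_zero, neg_zero]

/-- Product of the `g e i` over a finite set. -/
noncomputable def Pg (e : Fin n × Fin 2 → V) (s : Finset (Fin n)) : ExteriorAlgebra ℂ V :=
  s.noncommProd (g e) (fun i _ j _ _ => g_comm e i j)

theorem Pg_empty (e : Fin n × Fin 2 → V) : Pg e ∅ = 1 := Finset.noncommProd_empty _ _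

theorem Pg_insert (e : Fin n × Fin 2 → V) {a : Fin n} {s : Finset (Fin n)} (ha : a ∉ s) :
    Pg e (insert a s) = g e a * Pg e s :=
  Finset.noncommProd_insert_of_notMem _ _ _ _ ha

theorem Pg_pull (e : Fin n × Fin 2 → V) {s : Finset (Fin n)} {i : Fin n} (hi : i ∈ s) :
    Pg e s = g e i * Pg e (s.erase i) :=
  (Finset.mul_noncommProd_erase s hi _ _).symm

theorem absorb_Pg (e : Fin n × Fin 2 → V) {s : Finset (Fin n)} {i : Fin n} (hi : i ∈ s)
    (t : Fin 2) : ι ℂ (e (i, t)) * Pg e s = 0 := by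
  rw [Pg_pull e hi, ← mul_assoc, absorb, zero_mul]

theorem sum_smul_g_pow_card (e : Fin n × Fin 2 → V) (c : Fin n → ℂ) (s : Finset (Fin n)) :
    (∑ i ∈ s, c i • g e i) ^ s.card = s.card.factorial • ((∏ i ∈ s, c i) • Pg e s) := by
  have hc : ∀ i j, Commute (c i • g e i) (c j • g e j) :=
    fun i j => commute_smul (g_comm e i j) _ _
  have hsq : ∀ i, (c i • g e i) * (c i • g e i) = 0 := by
    intro i
    rw [smul_mul_smul_comm, g_sq, smul_zero]
  rw [sum_pow_card _ hc hsq, noncommProd_smul (g e) c (g_comm e) s]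
  rfl

theorem sum_smul_g_pow_overflow (e : Fin n × Fin 2 → V) (c : Fin n → ℂ) (s : Finset (Fin n))
    (k : ℕ) (h : s.card < k) : (∑ i ∈ s, c i • g e i) ^ k = 0 := by
  have hc : ∀ i j, Commute (c i • g e i) (c j • g e j) :=
    fun i j => commute_smul (g_comm e i j) _ _
  have hsq : ∀ i, (c i • g e i) * (c i • g e i) = 0 := by
    intro i
    rw [smul_mul_smul_comm, g_sq, smul_zero]
  exact sum_pow_overflow _ hc hsq s k h

theorem contract_Pg_zero (d : Module.Dual ℂ V) (e : Fin n × Fin 2 → V) (s : Finset (Fin n))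
    (hd : ∀ i ∈ s, ∀ t : Fin 2, d (e (i, t)) = 0) :
    CliffordAlgebra.contractLeft d (Pg e s) = 0 := by
  induction s using Finset.induction_on with
  | empty => rw [Pg_empty]; simp
  | insert _ _ ha ih =>
    rename_i a s
    rw [Pg_insert e ha, g, mul_assoc, CliffordAlgebra.contractLeft_ι_mul,
      CliffordAlgebra.contractLeft_ι_mul,
      ih (fun i hi t => hd i (Finset.mem_insert_of_mem hi) t),
      hd a (Finset.mem_insert_self a s) 0, hd a (Finset.mem_insert_self a s) 1]
    simp

theorem Pg_ne_zero (e : Basis (Fin n × Fin 2) ℂ V) (s : Finset (Fin n)) : Pg ⇑e s ≠ 0 := by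
  induction s using Finset.induction_on with
  | empty => rw [Pg_empty]; exact one_ne_zero
  | insert _ _ ha ih =>
    rename_i a s
    intro h0
    apply ih
    have hone : ∀ m : Fin n × Fin 2, e.coord m (e m) = 1 := by
      intro m; rw [Basis.coord_apply, Basis.repr_self, Finsupp.single_eq_same]
    have hzero : ∀ m m' : Fin n × Fin 2, m' ≠ m → e.coord m (e m') = 0 := by
      intro m m' hne
      rw [Basis.coord_apply, Basis.repr_self, Finsupp.single_apply, if_neg hne]
    have hPg0 : ∀ m : Fin n × Fin 2, m.1 ∉ s →
        CliffordAlgebra.contractLeft (e.coord m) (Pg ⇑e s) = 0 := by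
      intro m hm
      refine contract_Pg_zero _ _ _ fun i hi t => hzero m (i, t) ?_
      rintro rfl; exact hm hi
    have h1 : CliffordAlgebra.contractLeft (e.coord (a, 0)) (Pg ⇑e (insert a s))
        = ι ℂ (e (a, 1)) * Pg ⇑e s := by
      rw [Pg_insert _ ha, g, mul_assoc, CliffordAlgebra.contractLeft_ι_mul,
        CliffordAlgebra.contractLeft_ι_mul, hPg0 (a, 0) ha, hone,
        hzero (a, 0) (a, 1) (by simp)]
      simp
    have h2 : CliffordAlgebra.contractLeft (e.coord (a, 1)) (ι ℂ (e (a, 1)) * Pg ⇑e s)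
        = Pg ⇑e s := by
      rw [CliffordAlgebra.contractLeft_ι_mul, hPg0 (a, 1) ha, hone]
      simp
    rw [← h2, ← h1, h0, map_zero, map_zero]

/-- kernel lemma: if `ι v` kills the product over `s`, then `v` lies in the span of the
corresponding basis vectors. -/
theorem mem_span_of_mul_Pg (e : Basis (Fin n × Fin 2) ℂ V) (s : Finset (Fin n)) {v : V}
    (h : ι ℂ v * Pg ⇑e s = 0) :
    v ∈ Submodule.span ℂ (⇑e '' {m : Fin n × Fin 2 | m.1 ∈ s}) := by
  rw [Basis.mem_span_image]
  intro m hm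
  simp only [Finset.mem_coe, Finsupp.mem_support_iff] at hm
  by_contra hms
  simp only [Set.mem_setOf_eq] at hms
  apply hm
  have hPg0 : CliffordAlgebra.contractLeft (e.coord m) (Pg ⇑e s) = 0 := by
    refine contract_Pg_zero _ _ _ fun i hi t => ?_
    rw [Basis.coord_apply, Basis.repr_self, Finsupp.single_apply, if_neg]
    rintro rfl; exact hms hi
  have := congrArg (CliffordAlgebra.contractLeft (e.coord m)) h
  rw [CliffordAlgebra.contractLeft_ι_mul, hPg0, mul_zero, sub_zero, map_zero,
    Basis.coord_apply] at this
  rcases smul_eq_zero.mp this with hc | hP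
  · exact hc
  · exact absurd hP (Pg_ne_zero e s)

/-- If the family `w` is linearly dependent then the full product vanishes. -/
theorem Pg_eq_zero_of_dep (w : Fin n × Fin 2 → V) (hw : ¬ LinearIndependent ℂ w) :
    Pg w Finset.univ = 0 := by
  obtain ⟨c, hc, m₀, hm₀⟩ := Fintype.not_linearIndependent_iff.mp hw
  -- express w m₀ as a combination of the other vectors
  have hrepr : w m₀ = ∑ m ∈ Finset.univ.erase m₀, (-(c m₀)⁻¹ * c m) • w m := by
    have h1 : c m₀ • w m₀ + ∑ m ∈ Finset.univ.erase m₀, c m • w m = 0 := by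
      rw [Finset.add_sum_erase _ (fun m => c m • w m) (Finset.mem_univ m₀)]; exact hc
    have h2 : c m₀ • w m₀ = - ∑ m ∈ Finset.univ.erase m₀, c m • w m :=
      eq_neg_of_add_eq_zero_left h1
    calc w m₀ = (c m₀)⁻¹ • (c m₀ • w m₀) := by rw [smul_smul, inv_mul_cancel₀ hm₀, one_smul]
      _ = ∑ m ∈ Finset.univ.erase m₀, (-(c m₀)⁻¹ * c m) • w m := by
          rw [h2, smul_neg, Finset.smul_sum, ← Finset.sum_neg_distrib]
          refine Finset.sum_congr rfl fun m _ => ?_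
          rw [smul_smul, neg_mul, neg_smul]
  obtain ⟨i₀, t₀⟩ := m₀
  have hpull : Pg w Finset.univ = g w i₀ * Pg w (Finset.univ.erase i₀) :=
    Pg_pull w (Finset.mem_univ i₀)
  have habs : ∀ m : Fin n × Fin 2, m.1 ≠ i₀ →
      ι ℂ (w m) * Pg w (Finset.univ.erase i₀) = 0 := by
    intro m hm
    have : (m.1, m.2) = m := rfl
    rw [← this]
    exact absorb_Pg w (Finset.mem_erase.mpr ⟨hm, Finset.mem_univ _⟩) m.2
  have ht₀ : t₀ = 0 ∨ t₀ = 1 := by omega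
  rcases ht₀ with rfl | rfl
  · -- t₀ = 0
    have hiota : ι ℂ (w (i₀, 0)) = ∑ m ∈ Finset.univ.erase (i₀, (0 : Fin 2)),
        (-(c (i₀, 0))⁻¹ * c m) • ι ℂ (w m) := by
      rw [hrepr, map_sum]
      exact Finset.sum_congr rfl fun m _ => by rw [map_smul]
    rw [hpull, g, hiota, Finset.sum_mul, Finset.sum_mul]
    refine Finset.sum_eq_zero fun m hm => ?_
    rw [smul_mul_assoc, smul_mul_assoc]
    rcases eq_or_ne m.1 i₀ with h1 | h1
    · -- then m = (i₀, 1)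
      obtain ⟨mi, mt⟩ := m
      obtain rfl : mi = i₀ := h1
      have hmt : mt = 1 := by
        have : mt ≠ 0 := by
          rintro rfl; exact Finset.notMem_erase _ _ hm
        omega
      subst hmt
      rw [ExteriorAlgebra.ι_sq_zero, zero_mul, smul_zero]
    · have h2 : ι ℂ (w m) * ι ℂ (w (i₀, 1)) * Pg w (Finset.univ.erase i₀) = 0 := by
        rw [anticomm (w m) (w (i₀, 1))]
        rw [neg_mul, mul_assoc, habs m h1, mul_zero, neg_zero]
      rw [h2, smul_zero]
  · -- t₀ = 1
    have hiota : ι ℂ (w (i₀, 1)) = ∑ m ∈ Finset.univ.erase (i₀, (1 : Fin 2)),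
        (-(c (i₀, 1))⁻¹ * c m) • ι ℂ (w m) := by
      rw [hrepr, map_sum]
      exact Finset.sum_congr rfl fun m _ => by rw [map_smul]
    rw [hpull, g, hiota, Finset.mul_sum, Finset.sum_mul]
    refine Finset.sum_eq_zero fun m hm => ?_
    rw [mul_smul_comm, smul_mul_assoc]
    rcases eq_or_ne m.1 i₀ with h1 | h1
    · obtain ⟨mi, mt⟩ := m
      obtain rfl : mi = i₀ := h1
      have hmt : mt = 0 := by
        have : mt ≠ 1 := by
          rintro rfl; exact Finset.notMem_erase _ _ hm
        omega
      subst hmt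
      rw [ExteriorAlgebra.ι_sq_zero, zero_mul, smul_zero]
    · rw [mul_assoc, habs m h1, mul_zero, smul_zero]

theorem mul_pair (B0 B1 : V) (p q r s : ℂ) :
    ι ℂ (p • B0 + q • B1) * ι ℂ (r • B0 + s • B1)
      = (p * s - q * r) • (ι ℂ B0 * ι ℂ B1) := by
  rw [map_add, map_add, map_smul, map_smul, map_smul, map_smul, add_mul, mul_add, mul_add,
    smul_mul_smul_comm, smul_mul_smul_comm, smul_mul_smul_comm, smul_mul_smul_comm,
    ExteriorAlgebra.ι_sq_zero (R := ℂ) B0, ExteriorAlgebra.ι_sq_zero (R := ℂ) B1,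
    anticomm B1 B0, smul_zero, smul_zero, smul_neg, sub_smul]
  module

theorem sum_comb (c c' : Fin n → ℂ) (t : ℂ) (f : Fin n → ExteriorAlgebra ℂ V) :
    (∑ i, c' i • f i) - t • (∑ i, c i • f i) = ∑ i, (c' i - t * c i) • f i := by
  rw [Finset.smul_sum, ← Finset.sum_sub_distrib]
  exact Finset.sum_congr rfl fun i _ => by rw [sub_smul, smul_smul]

end Ext

end UniqSimDec


open Module

/-- Uniqueness of the simultaneous rank-2 decomposition of a general pair of 2-vectors:
with `γᵢ = uᵢ ∧ vᵢ` for a basis `u₁, v₁, …, uₙ, vₙ` of `V = ℂ^{2n}`, set `α = γ₁ + ⋯ + γₙ` and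
`α' = λ₁γ₁ + ⋯ + λₙγₙ` with pairwise distinct `λᵢ`.  If `δ₁, …, δₙ` are nonzero decomposable
2-vectors whose linear span contains `α` and `α'`, then the `δᵢ` are, up to a permutation
and nonzero scalars, exactly the `γᵢ`. -/
theorem unique_simultaneous_decomposition
    (n : ℕ) (hn : 1 ≤ n)
    (V : Type*) [AddCommGroup V] [Module ℂ V]
    (b : Basis (Fin n × Fin 2) ℂ V)
    (lam : Fin n → ℂ) (hlam : Function.Injective lam)
    (δ : Fin n → ExteriorAlgebra ℂ V)
    (hδ0 : ∀ i, δ i ≠ 0)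
    (hdec : ∀ i, ∃ x y : V, δ i = ExteriorAlgebra.ι ℂ x * ExteriorAlgebra.ι ℂ y)
    (hα : (∑ i, ExteriorAlgebra.ι ℂ (b (i, 0)) * ExteriorAlgebra.ι ℂ (b (i, 1))) ∈
        Submodule.span ℂ (Set.range δ))
    (hα' : (∑ i, lam i • (ExteriorAlgebra.ι ℂ (b (i, 0)) * ExteriorAlgebra.ι ℂ (b (i, 1)))) ∈
        Submodule.span ℂ (Set.range δ)) :
    ∃ (σ : Equiv.Perm (Fin n)) (c : Fin n → ℂ), (∀ i, c i ≠ 0) ∧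
      ∀ i, δ i = c i • (ExteriorAlgebra.ι ℂ (b (σ i, 0)) * ExteriorAlgebra.ι ℂ (b (σ i, 1))) := by
  classical
  haveI : FiniteDimensional ℂ V := Module.Finite.of_basis b
  -- choose the decomposing vectors
  choose xx yy hxy using hdec
  obtain ⟨w, hδw⟩ : ∃ w : Fin n × Fin 2 → V,
      ∀ i, δ i = ExteriorAlgebra.ι ℂ (w (i, 0)) * ExteriorAlgebra.ι ℂ (w (i, 1)) :=
    ⟨fun m => ![xx m.1, yy m.1] m.2, fun i => by simpa using hxy i⟩
  have hδg : ∀ i, δ i = UniqSimDec.g w i := hδw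
  -- coefficients of α and α' with respect to the δ's
  rw [Submodule.mem_span_range_iff_exists_fun] at hα hα'
  obtain ⟨a, ha⟩ := hα
  obtain ⟨a', ha'⟩ := hα'
  have hδsum : ∀ d : Fin n → ℂ, ∑ i, d i • δ i = ∑ i, d i • UniqSimDec.g w i :=
    fun d => Finset.sum_congr rfl fun i _ => by rw [hδg i]
  have hαg : (∑ i, ExteriorAlgebra.ι ℂ (b (i, 0)) * ExteriorAlgebra.ι ℂ (b (i, 1)))
      = ∑ i, UniqSimDec.g ⇑b i := rfl
  have hα'g : (∑ i, lam i • (ExteriorAlgebra.ι ℂ (b (i, 0)) * ExteriorAlgebra.ι ℂ (b (i, 1))))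
      = ∑ i, lam i • UniqSimDec.g ⇑b i := rfl
  have hcard : (Finset.univ : Finset (Fin n)).card = n := by simp
  -- power computations
  have hS : ∀ (c : Fin n → ℂ) (e : Fin n × Fin 2 → V),
      (∑ i, c i • UniqSimDec.g e i) ^ n
        = n.factorial • ((∏ i, c i) • UniqSimDec.Pg e Finset.univ) := by
    intro c e
    have h := UniqSimDec.sum_smul_g_pow_card e c Finset.univ
    rwa [hcard] at h
  have hErase : ∀ (c : Fin n → ℂ) (e : Fin n × Fin 2 → V) (j : Fin n), c j = 0 →
      ((∑ i, c i • UniqSimDec.g e i) ^ n = 0 ∧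
       (∑ i, c i • UniqSimDec.g e i) ^ (n - 1)
         = (n - 1).factorial • ((∏ l ∈ Finset.univ.erase j, c l) •
            UniqSimDec.Pg e (Finset.univ.erase j))) := by
    intro c e j hcj
    have hsum : ∑ i, c i • UniqSimDec.g e i = ∑ i ∈ Finset.univ.erase j, c i • UniqSimDec.g e i :=
      (Finset.sum_erase _ (by rw [hcj, zero_smul])).symm
    have hce : (Finset.univ.erase j).card = n - 1 := by
      rw [Finset.card_erase_of_mem (Finset.mem_univ j)]; simp
    constructor
    · rw [hsum]
      exact UniqSimDec.sum_smul_g_pow_overflow e c _ n (by rw [hce]; omega)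
    · rw [hsum, ← hce]
      exact UniqSimDec.sum_smul_g_pow_card e c _
  -- the volume identity
  have hkey : UniqSimDec.Pg ⇑b Finset.univ = (∏ i, a i) • UniqSimDec.Pg w Finset.univ := by
    have h1 := hS (fun _ => (1 : ℂ)) ⇑b
    simp only [one_smul, Finset.prod_const_one] at h1
    have h2 := hS a w
    rw [← hδsum a, ha, hαg] at h2
    have h3 := h1.symm.trans h2
    rw [← Nat.cast_smul_eq_nsmul ℂ, ← Nat.cast_smul_eq_nsmul ℂ] at h3
    exact smul_right_injective (ExteriorAlgebra ℂ V)
      (by exact_mod_cast n.factorial_ne_zero : (n.factorial : ℂ) ≠ 0) h3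
  have hPb : UniqSimDec.Pg ⇑b Finset.univ ≠ 0 := UniqSimDec.Pg_ne_zero b _
  have hprod_a : (∏ i, a i) ≠ 0 ∧ UniqSimDec.Pg w Finset.univ ≠ 0 := by
    rw [hkey] at hPb
    exact smul_ne_zero_iff.mp hPb
  have ha0 : ∀ i, a i ≠ 0 := fun i => Finset.prod_ne_zero_iff.mp hprod_a.1 i (Finset.mem_univ i)
  -- β computations: for every j the n-th power of α' - lam j • α vanishes
  have hβ : ∀ j : Fin n, (∑ i, (lam i - lam j * 1) • UniqSimDec.g ⇑b i)
      = ∑ i, (a' i - lam j * a i) • UniqSimDec.g w i := by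
    intro j
    rw [← UniqSimDec.sum_comb (fun _ => (1 : ℂ)) lam (lam j) (UniqSimDec.g ⇑b),
      ← UniqSimDec.sum_comb a a' (lam j) (UniqSimDec.g w), ← hδsum a, ← hδsum a', ha, ha']
    simp only [one_smul]
    rw [← hα'g, ← hαg]
  have hτ : ∀ j : Fin n, ∃ i, a' i - lam j * a i = 0 := by
    intro j
    have h1 := (hErase (fun i => lam i - lam j * 1) ⇑b j (by show lam j - lam j * 1 = 0; ring)).1
    rw [hβ j] at h1
    have h2 := hS (fun i => a' i - lam j * a i) w
    rw [h1] at h2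
    rw [← Nat.cast_smul_eq_nsmul ℂ] at h2
    have h3 : (∏ i, (a' i - lam j * a i)) • UniqSimDec.Pg w Finset.univ = 0 :=
      (smul_eq_zero.mp h2.symm).resolve_left
        (by exact_mod_cast n.factorial_ne_zero : (n.factorial : ℂ) ≠ 0)
    rcases smul_eq_zero.mp h3 with h | h
    · obtain ⟨i, -, hi⟩ := Finset.prod_eq_zero_iff.mp h
      exact ⟨i, hi⟩
    · exact absurd h hprod_a.2
  choose τ hτ' using hτ
  have hτinj : Function.Injective τ := by
    intro j j' hjj
    have e1 := sub_eq_zero.mp (hτ' j)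
    have e2 := sub_eq_zero.mp (hτ' j')
    rw [hjj] at e1
    rw [e2] at e1
    exact hlam (mul_right_cancel₀ (ha0 (τ j')) e1.symm)
  let E : Equiv.Perm (Fin n) := Equiv.ofBijective τ (Finite.injective_iff_bijective.mp hτinj)
  have hσ : ∀ i, a' i = lam (E.symm i) * a i := by
    intro i
    have h1 := sub_eq_zero.mp (hτ' (E.symm i))
    have h2 : τ (E.symm i) = i := E.apply_symm_apply i
    rwa [h2] at h1
  -- the main step: each δ i is a multiple of the corresponding γ
  have main : ∀ i : Fin n, ∃ c : ℂ, c ≠ 0 ∧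
      δ i = c • (ExteriorAlgebra.ι ℂ (b (E.symm i, 0)) * ExteriorAlgebra.ι ℂ (b (E.symm i, 1))) := by
    intro i
    have hWm : ∀ t : Fin 2, w (i, t) ∈ Submodule.span ℂ {b (E.symm i, 0), b (E.symm i, 1)} := by
      intro t
      have hsupp : ∀ k : Fin n, k ≠ E.symm i →
          ((b.repr (w (i, t))).support : Set (Fin n × Fin 2))
            ⊆ {m : Fin n × Fin 2 | m.1 ∈ Finset.univ.erase k} := by
        intro k hk
        have hii' : i ≠ E k := by
          intro h
          exact hk (by rw [h, E.symm_apply_apply])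
        have hcoef : a' (E k) - lam k * a (E k) = 0 := by
          have h1 := hσ (E k)
          rw [E.symm_apply_apply] at h1
          rw [h1, sub_self]
        have hγside := (hErase (fun l => lam l - lam k * 1) ⇑b k (by show lam k - lam k * 1 = 0; ring)).2
        have hδside := (hErase (fun l => a' l - lam k * a l) w (E k) hcoef).2
        have heq : (n - 1).factorial • ((∏ l ∈ Finset.univ.erase k, (lam l - lam k * 1)) •
            UniqSimDec.Pg ⇑b (Finset.univ.erase k))
          = (n - 1).factorial • ((∏ l ∈ Finset.univ.erase (E k), (a' l - lam k * a l)) •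
            UniqSimDec.Pg w (Finset.univ.erase (E k))) := by
          rw [← hγside, ← hδside, hβ k]
        have hz : ExteriorAlgebra.ι ℂ (w (i, t)) * UniqSimDec.Pg w (Finset.univ.erase (E k)) = 0 :=
          UniqSimDec.absorb_Pg w (Finset.mem_erase.mpr ⟨hii', Finset.mem_univ i⟩) t
        have h6 : ExteriorAlgebra.ι ℂ (w (i, t)) *
            ((n - 1).factorial • ((∏ l ∈ Finset.univ.erase k, (lam l - lam k * 1)) •
              UniqSimDec.Pg ⇑b (Finset.univ.erase k))) = 0 := by
          rw [heq, mul_smul_comm, mul_smul_comm, hz, smul_zero, smul_zero]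
        rw [mul_smul_comm, mul_smul_comm, ← Nat.cast_smul_eq_nsmul ℂ, smul_smul] at h6
        have hCγ : ((n - 1).factorial : ℂ) * (∏ l ∈ Finset.univ.erase k, (lam l - lam k * 1)) ≠ 0 := by
          apply mul_ne_zero
          · exact_mod_cast (n - 1).factorial_ne_zero
          · rw [Finset.prod_ne_zero_iff]
            intro l hl
            rw [mul_one, sub_ne_zero]
            exact fun hL => (Finset.mem_erase.mp hl).1 (hlam hL)
        have h5 := (smul_eq_zero.mp h6).resolve_left hCγ
        have h7 := UniqSimDec.mem_span_of_mul_Pg b (Finset.univ.erase k) h5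
        rw [Basis.mem_span_image] at h7
        exact h7
      have hsub : ((b.repr (w (i, t))).support : Set (Fin n × Fin 2))
          ⊆ {(E.symm i, 0), (E.symm i, 1)} := by
        intro m hm
        rcases eq_or_ne m.1 (E.symm i) with h1 | h1
        · obtain ⟨mi, mt⟩ := m
          obtain rfl : mi = E.symm i := h1
          have hmt : mt = 0 ∨ mt = 1 := by omega
          rcases hmt with rfl | rfl
          · exact Set.mem_insert _ _
          · exact Set.mem_insert_of_mem _ rfl
        · have h2 := hsupp m.1 h1 hm
          simp only [Set.mem_setOf_eq, Finset.mem_erase] at h2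
          exact absurd rfl h2.1
      have h8 : w (i, t) ∈ Submodule.span ℂ (⇑b '' {(E.symm i, 0), (E.symm i, 1)}) :=
        (Basis.mem_span_image b).mpr hsub
      rwa [Set.image_pair] at h8
    obtain ⟨p, q, hpq⟩ := Submodule.mem_span_pair.mp (hWm 0)
    obtain ⟨r, s', hrs⟩ := Submodule.mem_span_pair.mp (hWm 1)
    refine ⟨p * s' - q * r, ?_, ?_⟩
    · intro h0
      apply hδ0 i
      rw [hδw i, ← hpq, ← hrs, UniqSimDec.mul_pair, h0, zero_smul]
    · rw [hδw i, ← hpq, ← hrs, UniqSimDec.mul_pair]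
  choose c hc0 hcδ using main
  exact ⟨E.symm, c, hc0, hcδ⟩
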